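/- Let p ∈ (3/2, 2), and let s_p(r) = b(p) r^{-σ} be the Sommerfeld solution with b(p) = ((p-1)(3p-4)/(2π(2-p)²))^((p-1)/(2-p)), σ = 2(p-1)/(2-p), and let ζ = (-5p+6+√(p²+20p-28))/(2(2-p)). Then for any k ≥ 0, the radial function ω⁺(r) = (1 + k r^{-ζ}) s_p(r) satisfies Δω⁺ ≤ 4π (ω⁺)^{1/(p-1)} pointwise for all r > 0. -/

import Mathlib

open Real Filter

private lemma deriv_two_rpow (c₁ a₁ c₂ a₂ : ℝ) {r : ℝ} (hr : 0 < r) :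
    deriv (fun x : ℝ => c₁ * x ^ a₁ + c₂ * x ^ a₂) r
      = c₁ * a₁ * r ^ (a₁ - 1) + c₂ * a₂ * r ^ (a₂ - 1) := by
  have h1 := (Real.hasDerivAt_rpow_const (x := r) (p := a₁) (Or.inl hr.ne')).const_mul c₁
  have h2 := (Real.hasDerivAt_rpow_const (x := r) (p := a₂) (Or.inl hr.ne')).const_mul c₂
  rw [show (fun x : ℝ => c₁ * x ^ a₁ + c₂ * x ^ a₂) = (fun y => c₁ * y ^ a₁) + (fun y => c₂ * y ^ a₂) from rfl, (h1.add h2).deriv]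
  ring

theorem omega_plus_supersolution (p k : ℝ) (hp : 3/2 < p ∧ p < 2) (hk : 0 ≤ k) :
    let b : ℝ := ((p-1)*(3*p-4)/(2*π*(2-p)^2)) ^ ((p-1)/(2-p))
    let σ : ℝ := 2*(p-1)/(2-p)
    let ζ : ℝ := (-5*p + 6 + Real.sqrt (p^2 + 20*p - 28)) / (2*(2-p))
    let ω : ℝ → ℝ := fun r => (1 + k * r ^ (-ζ)) * (b * r ^ (-σ))
    ∀ r : ℝ, 0 < r →
      deriv (deriv ω) r + (2/r) * deriv ω r ≤ 4*π * (ω r) ^ (1/(p-1)) := by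
  obtain ⟨hp1, hp2⟩ := hp
  intro b σ ζ ω r hr
  have hπ : (0:ℝ) < π := Real.pi_pos
  have h2p : (0:ℝ) < 2 - p := by linarith
  have hp1' : (0:ℝ) < p - 1 := by linarith
  have h34 : (0:ℝ) < 3*p - 4 := by linarith
  set A : ℝ := (p-1)*(3*p-4)/(2*π*(2-p)^2) with hA_def
  have hA : 0 < A := by positivity
  have hb_def : b = A ^ ((p-1)/(2-p)) := rfl
  have hσ : σ = 2*(p-1)/(2-p) := rfl
  have hζ : ζ = (-5*p + 6 + Real.sqrt (p^2 + 20*p - 28)) / (2*(2-p)) := rfl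
  have hb : 0 < b := by rw [hb_def]; exact Real.rpow_pos_of_pos hA _
  have hD : (0:ℝ) < p^2 + 20*p - 28 := by nlinarith
  have hs2 : Real.sqrt (p^2 + 20*p - 28) ^ 2 = p^2 + 20*p - 28 :=
    Real.sq_sqrt hD.le
  -- key identity for ζ
  have hkey : (σ + ζ) * (σ + ζ - 1) * (p - 1) = σ * (σ - 1) := by
    rw [hσ, hζ]
    field_simp
    have hs2' : √(p*(p+20)-28)^2 = p*(p+20)-28 := by
      rw [show p*(p+20)-28 = p^2+20*p-28 by ring]; exact hs2
    linear_combination hs2'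
  set q : ℝ := 1/(p-1) with hq_def
  have hq1 : 1 ≤ q := by
    rw [hq_def]
    rw [le_div_iff₀ hp1']
    linarith
  -- derivative computations
  set f : ℝ → ℝ := fun x => b * x ^ (-σ) + (k*b) * x ^ (-ζ + -σ) with hf_def
  have hωf : ∀ x ∈ Set.Ioi (0:ℝ), ω x = f x := by
    intro x hx
    simp only [ω, hf_def]
    rw [Real.rpow_add hx]
    ring
  have hmem : Set.Ioi (0:ℝ) ∈ nhds r := Ioi_mem_nhds hr
  have hωf' : ω =ᶠ[nhds r] f := eventuallyEq_of_mem hmem hωf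
  set g : ℝ → ℝ := fun x => (b * (-σ)) * x ^ (-σ - 1) + (k*b*(-ζ + -σ)) * x ^ (-ζ + -σ - 1)
    with hg_def
  have hfg : ∀ x ∈ Set.Ioi (0:ℝ), deriv f x = g x := by
    intro x hx
    rw [hf_def, hg_def, deriv_two_rpow _ _ _ _ hx]
  have hd1 : deriv ω r = g r := by
    rw [hωf'.deriv_eq]; exact hfg r hr
  have hd2 : deriv (deriv ω) r
      = (b*(-σ))*(-σ-1) * r ^ (-σ-1-1) + (k*b*(-ζ + -σ))*(-ζ + -σ - 1) * r ^ (-ζ + -σ - 1 - 1) := by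
    have h1 : deriv ω =ᶠ[nhds r] deriv f := hωf'.deriv
    have h2 : deriv f =ᶠ[nhds r] g := eventuallyEq_of_mem hmem hfg
    rw [(h1.trans h2).deriv_eq, hg_def, deriv_two_rpow _ _ _ _ hr]
  -- abbreviations for powers
  set u : ℝ := r ^ (-σ - 2) with hu_def
  set v : ℝ := r ^ (-ζ) with hv_def
  have hu : 0 < u := Real.rpow_pos_of_pos hr _
  have hv : 0 ≤ v := (Real.rpow_pos_of_pos hr _).le
  have e1 : r ^ (-σ-1-1) = u := by rw [hu_def]; congr 1; ring
  have e2 : r ^ (-ζ + -σ - 1 - 1) = v * u := by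
    rw [hu_def, hv_def, ← Real.rpow_add hr]; ring_nf
  have e3 : r ^ (-σ - 1) = u * r := by
    rw [hu_def, ← Real.rpow_add_one hr.ne']; ring_nf
  have e4 : r ^ (-ζ + -σ - 1) = v * u * r := by
    rw [hu_def, hv_def, ← Real.rpow_add hr, ← Real.rpow_add_one hr.ne']; ring_nf
  -- left-hand side simplification
  have hLHS : deriv (deriv ω) r + (2/r) * deriv ω r
      = σ*(σ-1)*b*u * (1 + q * (k * v)) := by
    rw [hd2, hd1, hg_def]
    simp only [e1, e2, e3, e4]
    have hτ : (σ+ζ)*(σ+ζ-1) = σ*(σ-1) * q := by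
      rw [hq_def, mul_one_div, eq_div_iff hp1'.ne', ← hkey]
    have h2r : 2/r * ((b*(-σ))*(u*r) + (k*b*(-ζ + -σ))*(v*u*r))
        = 2*((b*(-σ))*u + (k*b*(-ζ + -σ))*(v*u)) := by
      field_simp
    rw [h2r]
    linear_combination (k*b*u*v)*hτ
  -- positivity facts
  have hσ1 : 1 < σ := by rw [hσ, lt_div_iff₀ h2p]; linarith
  have hσ0 : 0 < σ := by linarith
  have hx : 0 ≤ k * v := mul_nonneg hk hv
  have h1x : (0:ℝ) ≤ 1 + k * v := by linarith
  have hrσ : (0:ℝ) ≤ b * r ^ (-σ) := by positivity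
  -- exponent and coefficient identities
  have hexp : -σ * q = -σ - 2 := by rw [hσ, hq_def]; field_simp; ring
  have hbq : b ^ q = b * A := by
    have h1 : (p-1)/(2-p) * q = (p-1)/(2-p) + 1 := by
      rw [hq_def]; field_simp; ring
    rw [hb_def, ← Real.rpow_mul hA.le, h1, Real.rpow_add_one hA.ne']
  have h4A : 4*π*A = σ*(σ-1) := by
    rw [hA_def, hσ]; field_simp; ring
  -- right-hand side
  have hωr : ω r = (1 + k*v) * (b * r ^ (-σ)) := rfl
  have hRHS : 4*π * (ω r) ^ q = σ*(σ-1)*b*u * (1 + k*v) ^ q := by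
    rw [hωr, Real.mul_rpow h1x hrσ, Real.mul_rpow hb.le (Real.rpow_nonneg hr.le _),
      ← Real.rpow_mul hr.le, hexp, hbq, ← hu_def]
    linear_combination ((1+k*v)^q * b * u) * h4A
  rw [hLHS, hRHS]
  have hber : 1 + q * (k*v) ≤ (1 + k*v) ^ q :=
    one_add_mul_self_le_rpow_one_add (by linarith) hq1
  have hC : 0 ≤ σ*(σ-1)*b*u :=
    mul_nonneg (mul_nonneg (mul_nonneg hσ0.le (by linarith)) hb.le) hu.le
  exact mul_le_mul_of_nonneg_left hber hC
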